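/- Let G be a finite graph on vertex set X, and suppose a set R ⊆ X is constructed iteratively as follows: at each step, a set T of remaining vertices is chosen, an MIS L of the subgraph induced by T (within the current remaining graph) is added to R, and T together with its neighborhood N(T) is removed. If the process continues until no vertices remain, then the final R is an independent set in G and every vertex of X is within distance 2 of R in G. -/
import Mathlib


open Finset

/-- The iterative process (pick a test set `T` among remaining vertices, add an MIS `L` of
the induced subgraph on `T` to `R`, remove `T` together with its neighborhood in the
remaining graph) produces, once no vertices remain, a set `R` that is independent in `G`
and such that every vertex is within distance `2` of `R`. -/
theorem iterative_process_gives_two_ruling_set {X : Type*} [Fintype X] [DecidableEq X]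
    (G : SimpleGraph X) [DecidableRel G.Adj]
    (K : ℕ) (T L Rem : ℕ → Finset X) (R : Finset X)
    (hRem0 : Rem 0 = Finset.univ)
    (hT : ∀ t < K, T t ⊆ Rem t)
    (hLsub : ∀ t < K, L t ⊆ T t)
    (hLind : ∀ t < K, ∀ u ∈ L t, ∀ v ∈ L t, u ≠ v → ¬ G.Adj u v)
    (hLmax : ∀ t < K, ∀ v ∈ T t, v ∉ L t → ∃ u ∈ L t, G.Adj u v)
    (hRemStep : ∀ t < K,
      Rem (t+1) = (Rem t).filter (fun v => v ∉ T t ∧ ∀ u ∈ T t, ¬ G.Adj u v))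
    (hEnd : Rem K = ∅)
    (hR : R = (Finset.range K).biUnion L) :
    (∀ u ∈ R, ∀ v ∈ R, u ≠ v → ¬ G.Adj u v)
    ∧ ∀ v : X, ∃ u ∈ R, v = u ∨ G.Adj v u ∨ ∃ w : X, G.Adj v w ∧ G.Adj w u := by
  -- monotonicity: Rem t ⊆ Rem s for s ≤ t ≤ K
  have hmono : ∀ s t, s ≤ t → t ≤ K → Rem t ⊆ Rem s := by
    intro s t hst htK
    induction t with
    | zero => simp_all
    | succ n ih =>
      rcases Nat.lt_or_ge s (n+1) with h | h
      · have h1 : Rem (n+1) ⊆ Rem n := by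
          rw [hRemStep n (by omega)]; exact Finset.filter_subset _ _
        exact h1.trans (ih (by omega) (by omega))
      · have : s = n+1 := by omega
        subst this; exact subset_rfl
  -- key removal property: if v ∈ Rem (t+1) and u ∈ T t, then v ∉ T t and ¬Adj u v
  have hrem : ∀ t < K, ∀ v ∈ Rem (t+1), v ∉ T t ∧ ∀ u ∈ T t, ¬ G.Adj u v := by
    intro t ht v hv
    rw [hRemStep t ht, Finset.mem_filter] at hv
    exact hv.2
  constructor
  · intro u hu v hv huv
    subst hR
    rw [Finset.mem_biUnion] at hu hv
    obtain ⟨s, hs, hus⟩ := hu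
    obtain ⟨t, ht, hvt⟩ := hv
    rw [Finset.mem_range] at hs ht
    rcases lt_trichotomy s t with h | h | h
    · -- u ∈ L s ⊆ T s, v ∈ L t ⊆ Rem t ⊆ Rem (s+1)
      have hvRem : v ∈ Rem (s+1) :=
        hmono (s+1) t (by omega) (by omega) (hT t ht ((hLsub t ht) hvt))
      exact (hrem s hs v hvRem).2 u ((hLsub s hs) hus)
    · subst h; exact hLind s hs u hus v hvt huv
    · have huRem : u ∈ Rem (t+1) :=
        hmono (t+1) s (by omega) (by omega) (hT s hs ((hLsub s hs) hus))
      intro hadj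
      exact (hrem t ht u huRem).2 v ((hLsub t ht) hvt) hadj.symm
  · intro v
    -- v ∈ Rem 0, v ∉ Rem K: find first removal step
    have hex : ∃ t, t < K ∧ v ∈ Rem t ∧ v ∉ Rem (t+1) := by
      by_contra hc
      push_neg at hc
      have hall : ∀ n ≤ K, v ∈ Rem n := by
        intro n hn
        induction n with
        | zero => rw [hRem0]; exact Finset.mem_univ v
        | succ m ih => exact hc m (by omega) (ih (by omega))
      have := hall K le_rfl
      rw [hEnd] at this
      exact absurd this (Finset.notMem_empty v)
    obtain ⟨t, htK, hvin, hvout⟩ := hex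
    rw [hRemStep t htK, Finset.mem_filter] at hvout
    push_neg at hvout
    have hmemR : ∀ u ∈ L t, u ∈ R := by
      intro u hu
      rw [hR, Finset.mem_biUnion]
      exact ⟨t, Finset.mem_range.2 htK, hu⟩
    rcases Decidable.em (v ∈ T t) with hvT | hvT
    · rcases Decidable.em (v ∈ L t) with hvL | hvL
      · exact ⟨v, hmemR v hvL, Or.inl rfl⟩
      · obtain ⟨u, huL, hadj⟩ := hLmax t htK v hvT hvL
        exact ⟨u, hmemR u huL, Or.inr (Or.inl hadj.symm)⟩
    · obtain ⟨w, hwT, hadj⟩ := hvout hvin hvT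
      rcases Decidable.em (w ∈ L t) with hwL | hwL
      · exact ⟨w, hmemR w hwL, Or.inr (Or.inl hadj.symm)⟩
      · obtain ⟨u, huL, hadj'⟩ := hLmax t htK w hwT hwL
        exact ⟨u, hmemR u huL, Or.inr (Or.inr ⟨w, hadj.symm, hadj'.symm⟩)⟩
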